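/- Conversely, the minimal feasible z exactly identifies misplaced containers: if the container at position (s,h) is not misplaced under arrival order o (i.e., for every h' < h holding a container, the o-index of the class at (s,h') is at most the o-index of the class at (s,h)), then setting z_{s,h} = 0 satisfies all constraints z_{s,h} ≥ Σ_{k=r}^{R} x_{s,h,o_k} − Σ_{k=r}^{R} x_{s,h',o_k} for all h' < h and all r; hence the right-hand side is ≤ 0 in every such constraint. -/
import Mathlib

lemma aux_unique {n : ℕ} (y : Fin n → ℝ) (h01 : ∀ r, y r = 0 ∨ y r = 1)
    (hone : ∑ r, y r ≤ 1) {r0 r : Fin n} (h1 : y r0 = 1) (hne : r ≠ r0) :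
    y r = 0 := by
  rcases h01 r with h | h
  · exact h
  · exfalso
    have hnn : ∀ i ∈ Finset.univ, (0:ℝ) ≤ y i := by
      intro i _; rcases h01 i with h' | h' <;> simp [h']
    have hsub : ({r0, r} : Finset (Fin n)) ⊆ Finset.univ := Finset.subset_univ _
    have := Finset.sum_le_sum_of_subset_of_nonneg hsub (fun i _ _ => hnn i (Finset.mem_univ i))
    rw [Finset.sum_pair (Ne.symm hne)] at this
    rw [h1, h] at this
    linarith

/-- If the container at (s,h) is not misplaced under the arrival order o, then z_{s,h} = 0
satisfies all the constraints: the right-hand side of every constraint is ≤ 0. -/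
theorem not_misplaced_rhs_nonpos (S H : Type*) [LinearOrder H] (n : ℕ)
    (o : Equiv.Perm (Fin n)) (x : S → H → Fin n → ℝ)
    (hx01 : ∀ s h r, x s h r = 0 ∨ x s h r = 1)
    (hone : ∀ s h, ∑ r, x s h r ≤ 1)
    (s : S) (h : H)
    -- gravity: if (s,h) is occupied then every lower position in the stack is occupied
    (hgrav : ∀ h' : H, h' < h → (∃ r, x s h r = 1) → ∃ r', x s h' r' = 1)
    -- not misplaced: every container below (s,h) in the stack is retrieved no earlier
    (hnm : ∀ h' : H, h' < h → ∀ r r' : Fin n,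
      x s h r = 1 → x s h' r' = 1 → o.symm r ≤ o.symm r') :
    ∀ (r : Fin n) (h' : H), h' < h →
      (∑ k ∈ Finset.univ.filter (fun k => r ≤ k), x s h (o k)) -
      (∑ k ∈ Finset.univ.filter (fun k => r ≤ k), x s h' (o k)) ≤ 0 := by
  intro r h' hh'
  have hnn : ∀ s₀ h₀ r₀, (0:ℝ) ≤ x s₀ h₀ r₀ := by
    intro s₀ h₀ r₀; rcases hx01 s₀ h₀ r₀ with h'' | h'' <;> simp [h'']
  have hbotnn : 0 ≤ ∑ k ∈ Finset.univ.filter (fun k => r ≤ k), x s h' (o k) :=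
    Finset.sum_nonneg fun k _ => hnn _ _ _
  by_cases hocc : ∃ r0, x s h r0 = 1
  · obtain ⟨r0, hr0⟩ := hocc
    have htop : ∀ k ∈ Finset.univ.filter (fun k => r ≤ k), k ≠ o.symm r0 → x s h (o k) = 0 := by
      intro k _ hk
      apply aux_unique (x s h) (hx01 s h) (hone s h) hr0
      intro heq
      apply hk
      rw [← heq, Equiv.symm_apply_apply]
    by_cases hmem : o.symm r0 ∈ Finset.univ.filter (fun k => r ≤ k)
    · -- top sum = 1; find container below
      obtain ⟨r', hr'⟩ := hgrav h' hh' ⟨r0, hr0⟩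
      have hle : o.symm r0 ≤ o.symm r' := hnm h' hh' r0 r' hr0 hr'
      have hmem' : o.symm r' ∈ Finset.univ.filter (fun k => r ≤ k) := by
        simp only [Finset.mem_filter, Finset.mem_univ, true_and] at hmem ⊢
        exact le_trans hmem hle
      have hbot1 : (1:ℝ) ≤ ∑ k ∈ Finset.univ.filter (fun k => r ≤ k), x s h' (o k) := by
        have := Finset.single_le_sum (f := fun k => x s h' (o k))
          (fun k _ => hnn _ _ _) hmem'
        simpa [Equiv.apply_symm_apply, hr'] using this
      have htop1 : ∑ k ∈ Finset.univ.filter (fun k => r ≤ k), x s h (o k) ≤ 1 := by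
        calc ∑ k ∈ Finset.univ.filter (fun k => r ≤ k), x s h (o k)
            ≤ ∑ k, x s h (o k) := Finset.sum_le_sum_of_subset_of_nonneg
              (Finset.subset_univ _) (fun i _ _ => hnn _ _ _)
          _ = ∑ r, x s h r := Fintype.sum_equiv o _ _ (fun k => rfl)
          _ ≤ 1 := hone s h
      linarith
    · have : ∑ k ∈ Finset.univ.filter (fun k => r ≤ k), x s h (o k) = 0 := by
        apply Finset.sum_eq_zero
        intro k hk
        exact htop k hk (fun heq => hmem (heq ▸ hk))
      linarith
  · have : ∑ k ∈ Finset.univ.filter (fun k => r ≤ k), x s h (o k) = 0 := by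
      apply Finset.sum_eq_zero
      intro k _
      rcases hx01 s h (o k) with h'' | h''
      · exact h''
      · exact absurd ⟨o k, h''⟩ hocc
    linarith
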